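/- Let r = gcd(m,n), a = m/r, b = n/r, and let M ∈ M_{r×r}(ℝ) be orthogonal (MᵀM = I_r). Then the map ψ : M_{m×n} → M_{m×n}, A ↦ (M ⊗ I_a)·A·(Mᵀ ⊗ I_b), is a ring automorphism of (M_{m×n}, +, ⊛); in particular (Mᵀ ⊗ I_b)·Ψ_{n×m}·(M ⊗ I_a) = Ψ_{n×m}. -/

import Mathlib

open Matrix Kronecker Finset

noncomputable section

/-- The all-ones column vector of length `k`, viewed as a `k × 1` matrix. -/
def onesCol (k : ℕ) : Matrix (Fin k) (Fin 1) ℝ := Matrix.of fun _ _ => 1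

/-- `A ⊗ 1ᵀ_α`, reindexed to an ordinary `Fin`-indexed matrix. -/
def rightExpand {m n : ℕ} (A : Matrix (Fin m) (Fin n) ℝ) (α : ℕ) :
    Matrix (Fin m) (Fin (n * α)) ℝ :=
  Matrix.reindex (Equiv.prodUnique (Fin m) (Fin 1)) finProdFinEquiv (A ⊗ₖ (onesCol α)ᵀ)

/-- `B ⊗ 1_β`, reindexed to an ordinary `Fin`-indexed matrix. -/
def leftExpand {p q : ℕ} (B : Matrix (Fin p) (Fin q) ℝ) (β : ℕ) :
    Matrix (Fin (p * β)) (Fin q) ℝ :=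
  Matrix.reindex finProdFinEquiv (Equiv.prodUnique (Fin q) (Fin 1)) (B ⊗ₖ onesCol β)

theorem dk_dim_eq (n p : ℕ) :
    n * (Nat.lcm n p / n) = p * (Nat.lcm n p / p) := by
  rw [Nat.mul_div_cancel' (Nat.dvd_lcm_left n p),
    Nat.mul_div_cancel' (Nat.dvd_lcm_right n p)]

/-- The dimension keeping semi-tensor product (DK-STP)
`A ⊛ B := (A ⊗ 1ᵀ_{t/n})(B ⊗ 1_{t/p})`, `t = lcm(n,p)`. -/
def dkstp {m n p q : ℕ} (A : Matrix (Fin m) (Fin n) ℝ) (B : Matrix (Fin p) (Fin q) ℝ) :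
    Matrix (Fin m) (Fin q) ℝ :=
  rightExpand A (Nat.lcm n p / n) *
    (leftExpand B (Nat.lcm n p / p)).submatrix (Fin.cast (dk_dim_eq n p)) id

infixl:70 " ⊛ " => dkstp

/-- The bridge matrix `Ψ_{n×p} := (I_n ⊗ 1ᵀ_{t/n})(I_p ⊗ 1_{t/p})`. -/
def bridge (n p : ℕ) : Matrix (Fin n) (Fin p) ℝ :=
  (1 : Matrix (Fin n) (Fin n) ℝ) ⊛ (1 : Matrix (Fin p) (Fin p) ℝ)

/-- `x ⊗ 1_α`, as a vector of length `m * α`. -/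
def vecExpand {m : ℕ} (x : Fin m → ℝ) (α : ℕ) : Fin (m * α) → ℝ :=
  fun i => x (finProdFinEquiv.symm i).1

/-- The VV-STP `x ⊙ y := (x ⊗ 1_{t/m})ᵀ(y ⊗ 1_{t/n})`, `t = lcm(m,n)`. -/
def vvstp {m n : ℕ} (x : Fin m → ℝ) (y : Fin n → ℝ) : ℝ :=
  vecExpand x (Nat.lcm m n / m) ⬝ᵥ
    fun i => vecExpand y (Nat.lcm m n / n) (Fin.cast (dk_dim_eq m n) i)


/-- `M ⊗ I_{k/r}`, reindexed and cast to a `k × k` matrix (for `r ∣ k`). -/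
def blowup (r k : ℕ) (M : Matrix (Fin r) (Fin r) ℝ) (h : r * (k / r) = k) :
    Matrix (Fin k) (Fin k) ℝ :=
  (Matrix.reindex finProdFinEquiv finProdFinEquiv
      (M ⊗ₖ (1 : Matrix (Fin (k / r)) (Fin (k / r)) ℝ))).submatrix
    (Fin.cast h.symm) (Fin.cast h.symm)


lemma rightExpand_one_apply {n : ℕ} (α : ℕ) (i : Fin n) (j : Fin (n*α)) :
    rightExpand (1 : Matrix (Fin n) (Fin n) ℝ) α i j
      = if (i:ℕ) = (j:ℕ)/α then 1 else 0 := by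
  simp [rightExpand, onesCol, Matrix.one_apply, Fin.ext_iff]

lemma leftExpand_one_apply {m : ℕ} (β : ℕ) (i : Fin (m*β)) (j : Fin m) :
    leftExpand (1 : Matrix (Fin m) (Fin m) ℝ) β i j
      = if (i:ℕ)/β = (j:ℕ) then 1 else 0 := by
  simp [leftExpand, onesCol, Matrix.one_apply, Fin.ext_iff]

lemma rightExpand_eq_mul {m n : ℕ} (A : Matrix (Fin m) (Fin n) ℝ) (α : ℕ) :
    rightExpand A α = A * rightExpand (1 : Matrix (Fin n) (Fin n) ℝ) α := by
  ext i j
  simp [rightExpand, onesCol, Matrix.mul_apply, Matrix.one_apply]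

lemma leftExpand_eq_mul {p q : ℕ} (B : Matrix (Fin p) (Fin q) ℝ) (β : ℕ) :
    leftExpand B β = leftExpand (1 : Matrix (Fin p) (Fin p) ℝ) β * B := by
  ext i j
  simp [leftExpand, onesCol, Matrix.mul_apply, Matrix.one_apply]

lemma submatrix_cast_mul {k l p q : ℕ} (h : k = l) (X : Matrix (Fin l) (Fin p) ℝ)
    (B : Matrix (Fin p) (Fin q) ℝ) :
    ((X * B).submatrix (Fin.cast h) id) = X.submatrix (Fin.cast h) id * B := by
  ext i j
  simp [Matrix.mul_apply]

lemma dkstp_eq_mul_bridge {m n : ℕ} (A B : Matrix (Fin m) (Fin n) ℝ) :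
    A ⊛ B = A * bridge n m * B := by
  show _ = A * ((1 : Matrix (Fin n) (Fin n) ℝ) ⊛ (1 : Matrix (Fin m) (Fin m) ℝ)) * B
  unfold dkstp
  rw [rightExpand_eq_mul A, rightExpand_eq_mul (1 : Matrix (Fin n) (Fin n) ℝ),
    Matrix.one_mul, leftExpand_eq_mul B, leftExpand_eq_mul (1 : Matrix (Fin m) (Fin m) ℝ),
    Matrix.mul_one, submatrix_cast_mul]
  rw [Matrix.mul_assoc, Matrix.mul_assoc, Matrix.mul_assoc]

/-- `blowup` as a submatrix of a Kronecker product along any factorization `r * b = k`. -/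
lemma blowup_eq_submatrix {r k b : ℕ} (M : Matrix (Fin r) (Fin r) ℝ)
    (h : r * (k / r) = k) (h' : r * b = k) :
    blowup r k M h =
      (M ⊗ₖ (1 : Matrix (Fin b) (Fin b) ℝ)).submatrix
        ⇑((finCongr h'.symm).trans finProdFinEquiv.symm)
        ⇑((finCongr h'.symm).trans finProdFinEquiv.symm) := by
  rcases Nat.eq_zero_or_pos r with hr | hr
  · have hk : k = 0 := by subst hr; simpa using h'.symm
    subst hk
    ext i j
    exact i.elim0
  · have hb : b = k / r := by rw [← h', Nat.mul_div_cancel_left b hr]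
    subst hb
    rfl

lemma blowup_transpose {r k : ℕ} (M : Matrix (Fin r) (Fin r) ℝ) (h : r * (k / r) = k) :
    (blowup r k M h)ᵀ = blowup r k Mᵀ h := by
  rw [blowup_eq_submatrix M h h, blowup_eq_submatrix Mᵀ h h, Matrix.transpose_submatrix,
    ← Matrix.kroneckerMap_transpose, Matrix.transpose_one]

lemma blowup_mul {r k : ℕ} (M N : Matrix (Fin r) (Fin r) ℝ) (h : r * (k / r) = k) :
    blowup r k M h * blowup r k N h = blowup r k (M * N) h := by
  rw [blowup_eq_submatrix M h h, blowup_eq_submatrix N h h, blowup_eq_submatrix (M * N) h h,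
    Matrix.submatrix_mul_equiv, ← Matrix.mul_kronecker_mul, Matrix.one_mul]

lemma blowup_one {r k : ℕ} (h : r * (k / r) = k) :
    blowup r k (1 : Matrix (Fin r) (Fin r) ℝ) h = 1 := by
  rw [blowup_eq_submatrix 1 h h, Matrix.one_kronecker_one, Matrix.submatrix_one_equiv]

lemma bridge_apply (n m : ℕ) (i : Fin n) (j : Fin m) :
    bridge n m i j = ∑ k : Fin (n * (Nat.lcm n m / n)),
      (if (i:ℕ) = (k:ℕ) / (Nat.lcm n m / n) then 1 else 0) *
      (if (k:ℕ) / (Nat.lcm n m / m) = (j:ℕ) then 1 else 0) := by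
  show dkstp _ _ i j = _
  unfold dkstp
  rw [Matrix.mul_apply]
  refine Finset.sum_congr rfl fun k _ => ?_
  rw [rightExpand_one_apply, Matrix.submatrix_apply, id_eq, leftExpand_one_apply]
  simp

lemma ite_and_mul_one {P Q : Prop} [Decidable P] [Decidable Q] :
    (if P ∧ Q then (1:ℝ) else 0) = (if P then (1:ℝ) else 0) * (if Q then 1 else 0) := by
  by_cases hP : P <;> by_cases hQ : Q <;> simp [hP, hQ]

lemma nat_decomp {b i c v : ℕ} (hb : 0 < b) (hv : v < b) :
    (i = v + b * c) ↔ (i / b = c ∧ i % b = v) := by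
  constructor
  · rintro rfl
    constructor
    · rw [Nat.add_mul_div_left _ _ hb, Nat.div_eq_of_lt hv, Nat.zero_add]
    · rw [Nat.add_mul_mod_self_left, Nat.mod_eq_of_lt hv]
  · rintro ⟨rfl, rfl⟩
    exact (Nat.mod_add_div i b).symm

lemma delta_sum {r x y : ℕ} (hx : x < r) :
    ∑ c : Fin r, ((if x = (c:ℕ) then (1:ℝ) else 0) * (if y = (c:ℕ) then 1 else 0))
      = if x = y then 1 else 0 := by
  rw [Finset.sum_eq_single (⟨x, hx⟩ : Fin r)]
  · simp [eq_comm]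
  · intro c _ hc
    have : x ≠ (c:ℕ) := fun h => hc (Fin.ext h.symm)
    simp [this]
  · intro h; exact absurd (Finset.mem_univ _) h

def Wmat (a b : ℕ) : Matrix (Fin b) (Fin a) ℝ :=
  Matrix.of fun p q => ∑ u : Fin (b * a),
    (if (p:ℕ) = (u:ℕ)/a then 1 else 0) * (if (q:ℕ) = (u:ℕ)/b then 1 else 0)

lemma bridge_block {m n r : ℕ} (hra : r * (Nat.lcm n m / n) = m)
    (hrb : r * (Nat.lcm n m / m) = n) :
    bridge n m = ((1 : Matrix (Fin r) (Fin r) ℝ) ⊗ₖ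
        Wmat (Nat.lcm n m / n) (Nat.lcm n m / m)).submatrix
      ⇑((finCongr hrb.symm).trans finProdFinEquiv.symm)
      ⇑((finCongr hra.symm).trans finProdFinEquiv.symm) := by
  set a := Nat.lcm n m / n with hadef
  set b := Nat.lcm n m / m with hbdef
  ext i j
  rcases Nat.eq_zero_or_pos a with ha | ha
  · have hm0 : m = 0 := by rw [← hra, ha, Nat.mul_zero]
    exact absurd j.isLt (by omega)
  rcases Nat.eq_zero_or_pos b with hb | hb
  · have hn0 : n = 0 := by rw [← hrb, hb, Nat.mul_zero]
    exact absurd i.isLt (by omega)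
  rw [bridge_apply]
  have h' : n * a = r * (b * a) := by rw [← hrb]; ring
  rw [← Equiv.sum_comp (finProdFinEquiv.trans (finCongr h'.symm)), Fintype.sum_prod_type]
  have hval : ∀ (c : Fin r) (u : Fin (b * a)),
      (((finProdFinEquiv.trans (finCongr h'.symm)) (c, u) : Fin (n*a)) : ℕ)
        = (u:ℕ) + b * a * (c:ℕ) := by
    intro c u; simp
  have step : ∀ (c : Fin r) (u : Fin (b * a)),
      ((if (i:ℕ) = (((finProdFinEquiv.trans (finCongr h'.symm)) (c, u) : Fin (n*a)) : ℕ) / a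
          then (1:ℝ) else 0) *
        (if (((finProdFinEquiv.trans (finCongr h'.symm)) (c, u) : Fin (n*a)) : ℕ) / b = (j:ℕ)
          then (1:ℝ) else 0))
      = ((if (i:ℕ)/b = (c:ℕ) then (1:ℝ) else 0) * (if (j:ℕ)/a = (c:ℕ) then 1 else 0)) *
        ((if (i:ℕ)%b = (u:ℕ)/a then (1:ℝ) else 0) * (if (j:ℕ)%a = (u:ℕ)/b then 1 else 0)) := by
    intro c u
    have hu_a : (u:ℕ)/a < b := (Nat.div_lt_iff_lt_mul ha).mpr u.isLt
    have hu_b : (u:ℕ)/b < a := (Nat.div_lt_iff_lt_mul hb).mpr (by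
      rw [Nat.mul_comm a b]; exact u.isLt)
    rw [hval]
    rw [show ((u:ℕ) + b*a*(c:ℕ))/a = (u:ℕ)/a + b*(c:ℕ) by
      rw [show b*a*(c:ℕ) = a*(b*(c:ℕ)) by ring, Nat.add_mul_div_left _ _ ha]]
    rw [show ((u:ℕ) + b*a*(c:ℕ))/b = (u:ℕ)/b + a*(c:ℕ) by
      rw [show b*a*(c:ℕ) = b*(a*(c:ℕ)) by ring, Nat.add_mul_div_left _ _ hb]]
    have h1 : ((i:ℕ) = (u:ℕ)/a + b*(c:ℕ)) ↔ (((i:ℕ)/b = (c:ℕ)) ∧ ((i:ℕ)%b = (u:ℕ)/a)) :=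
      nat_decomp hb hu_a
    have h2 : ((u:ℕ)/b + a*(c:ℕ) = (j:ℕ)) ↔ (((j:ℕ)/a = (c:ℕ)) ∧ ((j:ℕ)%a = (u:ℕ)/b)) :=
      eq_comm.trans (nat_decomp ha hu_b)
    simp only [h1, h2, ite_and_mul_one]
    ring
  rw [Finset.sum_congr rfl fun c _ => Finset.sum_congr rfl fun u _ => step c u]
  rw [← Finset.sum_mul_sum]
  have hib : (i:ℕ)/b < r := (Nat.div_lt_iff_lt_mul hb).mpr (by rw [hrb]; exact i.isLt)
  rw [delta_sum hib]
  simp [Wmat, Matrix.one_apply, Fin.ext_iff]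
  rfl

lemma key_ident {m n r : ℕ} (M : Matrix (Fin r) (Fin r) ℝ) (hM : Mᵀ * M = 1)
    (hm : r * (m / r) = m) (hn : r * (n / r) = n)
    (hra : r * (Nat.lcm n m / n) = m) (hrb : r * (Nat.lcm n m / m) = n) :
    (blowup r n M hn)ᵀ * bridge n m * blowup r m M hm = bridge n m := by
  rw [blowup_transpose, blowup_eq_submatrix Mᵀ hn hrb, blowup_eq_submatrix M hm hra,
    bridge_block hra hrb, Matrix.submatrix_mul_equiv, Matrix.submatrix_mul_equiv,
    ← Matrix.mul_kronecker_mul, ← Matrix.mul_kronecker_mul, Matrix.mul_one, Matrix.one_mul,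
    Matrix.mul_one, hM]

lemma blowup_orth {r k : ℕ} (M : Matrix (Fin r) (Fin r) ℝ) (hM : Mᵀ * M = 1)
    (h : r * (k / r) = k) : (blowup r k M h)ᵀ * blowup r k M h = 1 := by
  rw [blowup_transpose, blowup_mul, hM, blowup_one]

lemma blowup_orth' {r k : ℕ} (M : Matrix (Fin r) (Fin r) ℝ) (hM : Mᵀ * M = 1)
    (h : r * (k / r) = k) : blowup r k M h * (blowup r k M h)ᵀ = 1 := by
  rw [blowup_transpose, blowup_mul, mul_eq_one_comm.mp hM, blowup_one]

/-- for `r = gcd(m,n)`, `a = m/r`, `b = n/r` and `M ∈ O(r)`,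
the map `ψ : A ↦ (M ⊗ I_a) A (Mᵀ ⊗ I_b)` is a ring automorphism of
`(M_{m×n}, +, ⊛)`; in particular `(Mᵀ ⊗ I_b) Ψ_{n×m} (M ⊗ I_a) = Ψ_{n×m}`. -/
theorem stmt13 {m n : ℕ} (M : Matrix (Fin (Nat.gcd m n)) (Fin (Nat.gcd m n)) ℝ)
    (hM : Mᵀ * M = 1) :
    (∀ A B : Matrix (Fin m) (Fin n) ℝ,
      blowup (Nat.gcd m n) m M (Nat.mul_div_cancel' (Nat.gcd_dvd_left m n)) * (A + B) *
          (blowup (Nat.gcd m n) n M (Nat.mul_div_cancel' (Nat.gcd_dvd_right m n)))ᵀ =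
        blowup (Nat.gcd m n) m M (Nat.mul_div_cancel' (Nat.gcd_dvd_left m n)) * A *
            (blowup (Nat.gcd m n) n M (Nat.mul_div_cancel' (Nat.gcd_dvd_right m n)))ᵀ +
          blowup (Nat.gcd m n) m M (Nat.mul_div_cancel' (Nat.gcd_dvd_left m n)) * B *
            (blowup (Nat.gcd m n) n M (Nat.mul_div_cancel' (Nat.gcd_dvd_right m n)))ᵀ) ∧
    (∀ A B : Matrix (Fin m) (Fin n) ℝ,
      blowup (Nat.gcd m n) m M (Nat.mul_div_cancel' (Nat.gcd_dvd_left m n)) * (A ⊛ B) *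
          (blowup (Nat.gcd m n) n M (Nat.mul_div_cancel' (Nat.gcd_dvd_right m n)))ᵀ =
        (blowup (Nat.gcd m n) m M (Nat.mul_div_cancel' (Nat.gcd_dvd_left m n)) * A *
            (blowup (Nat.gcd m n) n M (Nat.mul_div_cancel' (Nat.gcd_dvd_right m n)))ᵀ) ⊛
          (blowup (Nat.gcd m n) m M (Nat.mul_div_cancel' (Nat.gcd_dvd_left m n)) * B *
            (blowup (Nat.gcd m n) n M (Nat.mul_div_cancel' (Nat.gcd_dvd_right m n)))ᵀ)) ∧
    Function.Bijective (fun A : Matrix (Fin m) (Fin n) ℝ =>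
      blowup (Nat.gcd m n) m M (Nat.mul_div_cancel' (Nat.gcd_dvd_left m n)) * A *
        (blowup (Nat.gcd m n) n M (Nat.mul_div_cancel' (Nat.gcd_dvd_right m n)))ᵀ) ∧
    (blowup (Nat.gcd m n) n M (Nat.mul_div_cancel' (Nat.gcd_dvd_right m n)))ᵀ *
        bridge n m * blowup (Nat.gcd m n) m M (Nat.mul_div_cancel' (Nat.gcd_dvd_left m n)) =
      bridge n m := by
  rcases Nat.eq_zero_or_pos m with hm0 | hm0
  · subst hm0
    exact ⟨fun A B => by ext i j; exact i.elim0,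
      fun A B => by ext i j; exact i.elim0,
      ⟨fun A B _ => by ext i j; exact i.elim0,
       fun A => ⟨A, by ext i j; exact i.elim0⟩⟩,
      by ext i j; exact j.elim0⟩
  rcases Nat.eq_zero_or_pos n with hn0 | hn0
  · subst hn0
    exact ⟨fun A B => by ext i j; exact j.elim0,
      fun A B => by ext i j; exact j.elim0,
      ⟨fun A B _ => by ext i j; exact j.elim0,
       fun A => ⟨A, by ext i j; exact j.elim0⟩⟩,
      by ext i j; exact i.elim0⟩
  have hra : Nat.gcd m n * (Nat.lcm n m / n) = m := by
    apply Nat.eq_of_mul_eq_mul_left hn0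
    calc n * (Nat.gcd m n * (Nat.lcm n m / n))
        = Nat.gcd n m * (n * (Nat.lcm n m / n)) := by rw [Nat.gcd_comm]; ring
      _ = Nat.gcd n m * Nat.lcm n m := by rw [Nat.mul_div_cancel' (Nat.dvd_lcm_left n m)]
      _ = n * m := Nat.gcd_mul_lcm n m
  have hrb : Nat.gcd m n * (Nat.lcm n m / m) = n := by
    apply Nat.eq_of_mul_eq_mul_left hm0
    calc m * (Nat.gcd m n * (Nat.lcm n m / m))
        = Nat.gcd n m * (m * (Nat.lcm n m / m)) := by rw [Nat.gcd_comm]; ring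
      _ = Nat.gcd n m * Nat.lcm n m := by rw [Nat.mul_div_cancel' (Nat.dvd_lcm_right n m)]
      _ = n * m := Nat.gcd_mul_lcm n m
      _ = m * n := Nat.mul_comm n m
  have key := key_ident M hM (Nat.mul_div_cancel' (Nat.gcd_dvd_left m n))
    (Nat.mul_div_cancel' (Nat.gcd_dvd_right m n)) hra hrb
  have key' : ∀ (X : Matrix (Fin m) (Fin n) ℝ),
      (blowup (Nat.gcd m n) n M (Nat.mul_div_cancel' (Nat.gcd_dvd_right m n)))ᵀ *
        (bridge n m *
          (blowup (Nat.gcd m n) m M (Nat.mul_div_cancel' (Nat.gcd_dvd_left m n)) * X)) =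
      bridge n m * X := by
    intro X
    rw [← Matrix.mul_assoc, ← Matrix.mul_assoc, key]
  have hPP := blowup_orth M hM (Nat.mul_div_cancel' (Nat.gcd_dvd_left m n))
  have hPP' := blowup_orth' M hM (Nat.mul_div_cancel' (Nat.gcd_dvd_left m n))
  have hQQ := blowup_orth M hM (Nat.mul_div_cancel' (Nat.gcd_dvd_right m n))
  have hQQ' := blowup_orth' M hM (Nat.mul_div_cancel' (Nat.gcd_dvd_right m n))
  refine ⟨fun A B => by rw [Matrix.mul_add, Matrix.add_mul], fun A B => ?_, ?_, key⟩
  · rw [dkstp_eq_mul_bridge, dkstp_eq_mul_bridge]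
    simp only [Matrix.mul_assoc]
    rw [key' (B * (blowup (Nat.gcd m n) n M (Nat.mul_div_cancel' (Nat.gcd_dvd_right m n)))ᵀ)]
  · refine Function.bijective_iff_has_inverse.mpr
      ⟨fun A => (blowup (Nat.gcd m n) m M (Nat.mul_div_cancel' (Nat.gcd_dvd_left m n)))ᵀ *
        A * blowup (Nat.gcd m n) n M (Nat.mul_div_cancel' (Nat.gcd_dvd_right m n)),
        fun A => ?_, fun A => ?_⟩
    · simp only [Matrix.mul_assoc]
      rw [hQQ, Matrix.mul_one, ← Matrix.mul_assoc, hPP, Matrix.one_mul]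
    · simp only [Matrix.mul_assoc]
      rw [hQQ', Matrix.mul_one, ← Matrix.mul_assoc, hPP', Matrix.one_mul]
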